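/- arXiv:2605.10975 — 2 statements merged into one kernel-verified Lean document; each statement's English description precedes it below -/
import Mathlib

section
/- Let L and Δ be n×n real symmetric matrices. Let λ₁ ≤ … ≤ λ_n be the eigenvalues of L with corresponding orthonormal eigenvectors u₁,…,u_n, and let μ₁ ≤ … ≤ μ_n be the eigenvalues of L + Δ, all counted with multiplicity. Fix 1 ≤ τ ≤ n and a real constant c. If xᵀΔx ≤ c·‖x‖² for every x in span{u₁,…,u_τ}, then μ_k ≤ λ_k + c for every k ≤ τ. -/
open Matrix
open scoped RealInnerProductSpace

/-- Representation of an element of the span of part of an orthonormal family. -/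
lemma aux_span_repr {n : ℕ} (u : Fin n → EuclideanSpace ℝ (Fin n))
    (F : Finset (Fin n)) {x : EuclideanSpace ℝ (Fin n)}
    (hx : x ∈ Submodule.span ℝ (u '' ↑F)) :
    ∃ f : Fin n → ℝ, x = ∑ i ∈ F, f i • u i := by
  obtain ⟨l, hl, rfl⟩ := (Finsupp.mem_span_image_iff_linearCombination ℝ).1 hx
  refine ⟨l, ?_⟩
  rw [Finsupp.linearCombination_apply, Finsupp.sum]
  refine Finset.sum_subset (by exact_mod_cast (Finsupp.mem_supported ℝ l).1 hl) ?_
  intro i _ hi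
  simp [Finsupp.notMem_support_iff.1 hi]

lemma aux_norm_sq {n : ℕ} {u : Fin n → EuclideanSpace ℝ (Fin n)} (hu : Orthonormal ℝ u)
    (F : Finset (Fin n)) (f : Fin n → ℝ) :
    ‖∑ i ∈ F, f i • u i‖ ^ 2 = ∑ i ∈ F, (f i) ^ 2 := by
  rw [← real_inner_self_eq_norm_sq]
  have := hu.inner_sum f f F
  simpa [sq] using this

lemma aux_quad {n : ℕ} {u : Fin n → EuclideanSpace ℝ (Fin n)} (hu : Orthonormal ℝ u)
    (A : EuclideanSpace ℝ (Fin n) →ₗ[ℝ] EuclideanSpace ℝ (Fin n)) (a : Fin n → ℝ)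
    (hA : ∀ i, A (u i) = a i • u i) (F : Finset (Fin n)) (f : Fin n → ℝ) :
    ⟪∑ i ∈ F, f i • u i, A (∑ i ∈ F, f i • u i)⟫ = ∑ i ∈ F, a i * (f i) ^ 2 := by
  have hAx : A (∑ i ∈ F, f i • u i) = ∑ i ∈ F, (a i * f i) • u i := by
    rw [map_sum]
    refine Finset.sum_congr rfl fun i _ => ?_
    rw [A.map_smul, hA, smul_smul, mul_comm]
  rw [hAx]
  have := hu.inner_sum f (fun i => a i * f i) F
  simpa [sq, mul_comm, mul_assoc, mul_left_comm] using this

lemma aux_finrank {n : ℕ} {u : Fin n → EuclideanSpace ℝ (Fin n)} (hu : Orthonormal ℝ u)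
    (F : Finset (Fin n)) :
    Module.finrank ℝ (Submodule.span ℝ (u '' ↑F)) = F.card := by
  classical
  have hli : LinearIndependent ℝ u := hu.linearIndependent
  have h1 : LinearIndependent ℝ (fun x : (↑F : Set (Fin n)) => u x) :=
    hli.comp _ Subtype.val_injective
  have h2 : LinearIndependent ℝ ((↑) : (u '' ↑F) → EuclideanSpace ℝ (Fin n)) :=
    (linearIndepOn_iff_image (hli.injective.injOn)).1 h1
  haveI : Fintype ↑(u '' (↑F : Set (Fin n))) := Fintype.ofFinite _
  rw [finrank_span_set_eq_card h2]
  simp [Set.toFinset_image, Finset.card_image_of_injective _ hli.injective]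

/-- (Low-pass band stability, Courant–Fischer.) Let `L, Δ` be real symmetric
`n×n` matrices, with eigenvalues `λ₁ ≤ … ≤ λ_n` of `L` (orthonormal eigenvectors `u₁,…,u_n`) and
`μ₁ ≤ … ≤ μ_n` of `L + Δ`, all with multiplicity. If `xᵀΔx ≤ c‖x‖²` for every `x` in the span of
the first `τ` eigenvectors of `L`, then `μ_k ≤ λ_k + c` for every `k ≤ τ`. -/
theorem stmt4 (n τ : ℕ) (hτ1 : 1 ≤ τ) (hτn : τ ≤ n)
    (L Δ : Matrix (Fin n) (Fin n) ℝ) (hL : L.IsSymm) (hΔ : Δ.IsSymm)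
    (lam mu : Fin n → ℝ) (hlam : Monotone lam) (hmu : Monotone mu)
    (u : Fin n → EuclideanSpace ℝ (Fin n)) (hu : Orthonormal ℝ u)
    (hLu : ∀ i, Matrix.toEuclideanLin L (u i) = lam i • u i)
    (v : Fin n → EuclideanSpace ℝ (Fin n)) (hv : Orthonormal ℝ v)
    (hMv : ∀ i, Matrix.toEuclideanLin (L + Δ) (v i) = mu i • v i)
    (c : ℝ)
    (hquad : ∀ x ∈ Submodule.span ℝ (u '' {i : Fin n | (i : ℕ) < τ}),
      ⟪x, Matrix.toEuclideanLin Δ x⟫ ≤ c * ‖x‖ ^ 2) :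
    ∀ k : Fin n, (k : ℕ) < τ → mu k ≤ lam k + c := by
  classical
  intro k hk
  set A := Matrix.toEuclideanLin L with hA
  set B := Matrix.toEuclideanLin Δ with hB
  have hAB : Matrix.toEuclideanLin (L + Δ) = A + B := by
    rw [hA, hB, map_add]
  set S₁ := Submodule.span ℝ (u '' ↑(Finset.Iic k)) with hS₁
  set S₂ := Submodule.span ℝ (v '' ↑(Finset.Ici k)) with hS₂
  have e1 : Module.finrank ℝ S₁ = (k : ℕ) + 1 := by
    rw [hS₁, aux_finrank hu]; exact Fin.card_Iic k
  have e2 : Module.finrank ℝ S₂ = n - (k : ℕ) := by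
    rw [hS₂, aux_finrank hv]; exact Fin.card_Ici k
  have hsum := Submodule.finrank_sup_add_finrank_inf_eq S₁ S₂
  have hle : Module.finrank ℝ ↥(S₁ ⊔ S₂) ≤ n :=
    le_trans (Submodule.finrank_le _) (le_of_eq finrank_euclideanSpace_fin)
  have hkn : (k : ℕ) < n := k.isLt
  have hinf : 0 < Module.finrank ℝ ↥(S₁ ⊓ S₂) := by omega
  have hne : S₁ ⊓ S₂ ≠ ⊥ := by
    intro h
    rw [h, finrank_bot] at hinf
    exact lt_irrefl _ hinf
  obtain ⟨x, hxmem, hx0⟩ := (Submodule.ne_bot_iff _).1 hne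
  obtain ⟨f, hf⟩ := aux_span_repr u (Finset.Iic k) hxmem.1
  obtain ⟨g, hg⟩ := aux_span_repr v (Finset.Ici k) hxmem.2
  have hpos : (0 : ℝ) < ‖x‖ ^ 2 := by
    have := norm_pos_iff.2 hx0
    positivity
  -- upper bound for L on x
  have hQ1 : ⟪x, A x⟫ ≤ lam k * ‖x‖ ^ 2 := by
    rw [hf, aux_quad hu A lam hLu _ f, aux_norm_sq hu _ f, Finset.mul_sum]
    refine Finset.sum_le_sum fun i hi => ?_
    have hik : lam i ≤ lam k := hlam (Finset.mem_Iic.1 hi)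
    nlinarith [sq_nonneg (f i)]
  -- lower bound for L+Δ on x
  have hMv' : ∀ i, (A + B) (v i) = mu i • v i := fun i => by rw [← hAB]; exact hMv i
  have hQ2 : mu k * ‖x‖ ^ 2 ≤ ⟪x, (A + B) x⟫ := by
    rw [hg, aux_quad hv (A + B) mu hMv' _ g, aux_norm_sq hv _ g, Finset.mul_sum]
    refine Finset.sum_le_sum fun i hi => ?_
    have hik : mu k ≤ mu i := hmu (Finset.mem_Ici.1 hi)
    nlinarith [sq_nonneg (g i)]
  -- Δ bound
  have hxτ : x ∈ Submodule.span ℝ (u '' {i : Fin n | (i : ℕ) < τ}) := by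
    refine Submodule.span_mono (Set.image_mono (f := u) ?_) hxmem.1
    intro i hi
    have : i ≤ k := by simpa using hi
    exact lt_of_le_of_lt (by exact_mod_cast this) hk
  have hQ3 : ⟪x, B x⟫ ≤ c * ‖x‖ ^ 2 := hquad x hxτ
  have hsplit : ⟪x, (A + B) x⟫ = ⟪x, A x⟫ + ⟪x, B x⟫ := by
    simp [inner_add_right]
  nlinarith [hQ1, hQ2, hQ3, hsplit, hpos]
end

section
/- Let L and Δ be n×n real symmetric matrices. Let λ₁ ≤ … ≤ λ_n be the eigenvalues of L with corresponding orthonormal eigenvectors u₁,…,u_n, and let μ₁ ≤ … ≤ μ_n be the eigenvalues of L + Δ, all counted with multiplicity. Fix 0 ≤ τ < n and a real constant c. If xᵀΔx ≥ c·‖x‖² for every x in span{u_{τ+1},…,u_n}, then μ_k ≥ λ_k + c for every k > τ. -/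
open Matrix
open scoped RealInnerProductSpace

section aux

variable {n : ℕ} {E : Type*} [NormedAddCommGroup E] [InnerProductSpace ℝ E]

lemma stmt5_repr_zero (b : OrthonormalBasis (Fin n) ℝ E) (s : Set (Fin n)) {x : E}
    (hx : x ∈ Submodule.span ℝ (⇑b '' s)) {i : Fin n} (hi : i ∉ s) : b.repr x i = 0 := by
  rw [b.repr_apply_apply]
  induction hx using Submodule.span_induction with
  | mem y hy =>
      obtain ⟨j, hj, rfl⟩ := hy
      exact b.orthonormal.2 (fun h => hi (h ▸ hj))
  | zero => simp
  | add y z _ _ hy hz => rw [inner_add_right, hy, hz, add_zero]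
  | smul a y _ hy => rw [inner_smul_right, hy, mul_zero]

lemma stmt5_inner_map (b : OrthonormalBasis (Fin n) ℝ E) (T : E →ₗ[ℝ] E) (lam : Fin n → ℝ)
    (hT : ∀ i, T (b i) = lam i • b i) (x : E) :
    ⟪x, T x⟫ = ∑ i, lam i * (b.repr x i) ^ 2 := by
  have hTx : T x = ∑ i, (lam i * b.repr x i) • b i := by
    conv_lhs => rw [← b.sum_repr x]
    rw [map_sum]
    refine Finset.sum_congr rfl fun i _ => ?_
    rw [T.map_smul, hT, smul_smul, mul_comm]
  have hoi : ∀ i j : Fin n, ⟪b i, b j⟫ = if i = j then (1:ℝ) else 0 := fun i j =>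
    orthonormal_iff_ite.mp b.orthonormal i j
  have hrepr : ∀ j, b.repr (T x) j = lam j * b.repr x j := by
    intro j
    rw [b.repr_apply_apply, hTx, inner_sum]
    simp [real_inner_smul_right, hoi, Finset.sum_ite_eq, Finset.sum_ite_eq']
  calc ⟪x, T x⟫ = ⟪b.repr x, b.repr (T x)⟫ := (b.repr.inner_map_map x (T x)).symm
    _ = ∑ i, b.repr x i * b.repr (T x) i := by
        simp only [PiLp.inner_apply, RCLike.inner_apply, conj_trivial]
        exact Finset.sum_congr rfl fun i _ => mul_comm _ _
    _ = ∑ i, lam i * (b.repr x i) ^ 2 := by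
        refine Finset.sum_congr rfl fun i _ => ?_
        rw [hrepr]; ring

lemma stmt5_norm_sq (b : OrthonormalBasis (Fin n) ℝ E) (x : E) :
    ‖x‖ ^ 2 = ∑ i, (b.repr x i) ^ 2 := by
  rw [← real_inner_self_eq_norm_sq, ← b.repr.inner_map_map x x]
  simp only [PiLp.inner_apply, RCLike.inner_apply, conj_trivial, sq]

lemma stmt5_quad_ge (b : OrthonormalBasis (Fin n) ℝ E) (T : E →ₗ[ℝ] E) (lam : Fin n → ℝ)
    (hT : ∀ i, T (b i) = lam i • b i) (hlam : Monotone lam) (k : Fin n) {x : E}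
    (hx : x ∈ Submodule.span ℝ (⇑b '' Set.Ici k)) :
    lam k * ‖x‖ ^ 2 ≤ ⟪x, T x⟫ := by
  rw [stmt5_inner_map b T lam hT, stmt5_norm_sq b, Finset.mul_sum]
  refine Finset.sum_le_sum fun i _ => ?_
  by_cases h : k ≤ i
  · have := hlam h
    nlinarith [sq_nonneg (b.repr x i)]
  · rw [stmt5_repr_zero b _ hx (by simpa using h)]
    simp

lemma stmt5_quad_le (b : OrthonormalBasis (Fin n) ℝ E) (T : E →ₗ[ℝ] E) (lam : Fin n → ℝ)
    (hT : ∀ i, T (b i) = lam i • b i) (hlam : Monotone lam) (k : Fin n) {x : E}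
    (hx : x ∈ Submodule.span ℝ (⇑b '' Set.Iic k)) :
    ⟪x, T x⟫ ≤ lam k * ‖x‖ ^ 2 := by
  rw [stmt5_inner_map b T lam hT, stmt5_norm_sq b, Finset.mul_sum]
  refine Finset.sum_le_sum fun i _ => ?_
  by_cases h : i ≤ k
  · have := hlam h
    nlinarith [sq_nonneg (b.repr x i)]
  · rw [stmt5_repr_zero b _ hx (by simpa using h)]
    simp

end aux

/-- (High-pass band lift, Courant–Fischer.) Let `L, Δ` be real symmetric
`n×n` matrices, with eigenvalues `λ₁ ≤ … ≤ λ_n` of `L` (orthonormal eigenvectors `u₁,…,u_n`) and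
`μ₁ ≤ … ≤ μ_n` of `L + Δ`, all with multiplicity. If `xᵀΔx ≥ c‖x‖²` for every `x` in the span of
the last `n − τ` eigenvectors of `L`, then `μ_k ≥ λ_k + c` for every `k > τ`. -/
theorem stmt5 (n τ : ℕ) (hτn : τ < n)
    (L Δ : Matrix (Fin n) (Fin n) ℝ) (hL : L.IsSymm) (hΔ : Δ.IsSymm)
    (lam mu : Fin n → ℝ) (hlam : Monotone lam) (hmu : Monotone mu)
    (u : Fin n → EuclideanSpace ℝ (Fin n)) (hu : Orthonormal ℝ u)
    (hLu : ∀ i, Matrix.toEuclideanLin L (u i) = lam i • u i)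
    (v : Fin n → EuclideanSpace ℝ (Fin n)) (hv : Orthonormal ℝ v)
    (hMv : ∀ i, Matrix.toEuclideanLin (L + Δ) (v i) = mu i • v i)
    (c : ℝ)
    (hquad : ∀ x ∈ Submodule.span ℝ (u '' {i : Fin n | τ ≤ (i : ℕ)}),
      c * ‖x‖ ^ 2 ≤ ⟪x, Matrix.toEuclideanLin Δ x⟫) :
    ∀ k : Fin n, τ ≤ (k : ℕ) → lam k + c ≤ mu k := by
  intro k hk
  haveI : Nonempty (Fin n) := ⟨k⟩
  have hfr : Module.finrank ℝ (EuclideanSpace ℝ (Fin n)) = n := finrank_euclideanSpace_fin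
  have hcard : Fintype.card (Fin n) = Module.finrank ℝ (EuclideanSpace ℝ (Fin n)) := by
    simp [hfr]
  let bu : OrthonormalBasis (Fin n) ℝ (EuclideanSpace ℝ (Fin n)) :=
    OrthonormalBasis.mk hu (hu.linearIndependent.span_eq_top_of_card_eq_finrank hcard).ge
  let bv : OrthonormalBasis (Fin n) ℝ (EuclideanSpace ℝ (Fin n)) :=
    OrthonormalBasis.mk hv (hv.linearIndependent.span_eq_top_of_card_eq_finrank hcard).ge
  have hbu : ⇑bu = u := OrthonormalBasis.coe_mk _ _
  have hbv : ⇑bv = v := OrthonormalBasis.coe_mk _ _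
  set U : Submodule ℝ (EuclideanSpace ℝ (Fin n)) := Submodule.span ℝ (u '' Set.Ici k) with hUdef
  set V : Submodule ℝ (EuclideanSpace ℝ (Fin n)) := Submodule.span ℝ (v '' Set.Iic k) with hVdef
  have hUr : Module.finrank ℝ U = n - (k : ℕ) := by
    have h1 := finrank_span_eq_card (R := ℝ)
      (hu.linearIndependent.comp (Subtype.val : {i : Fin n // i ∈ Set.Ici k} → Fin n) Subtype.val_injective)
    rw [hUdef, Set.image_eq_range u (Set.Ici k)]
    exact h1.trans ((Fintype.card_congr (Equiv.refl _)).trans ((Fintype.card_Ici k).trans (Fin.card_Ici k)))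
  have hVr : Module.finrank ℝ V = (k : ℕ) + 1 := by
    have h1 := finrank_span_eq_card (R := ℝ)
      (hv.linearIndependent.comp (Subtype.val : {i : Fin n // i ∈ Set.Iic k} → Fin n) Subtype.val_injective)
    rw [hVdef, Set.image_eq_range v (Set.Iic k)]
    exact h1.trans ((Fintype.card_congr (Equiv.refl _)).trans ((Fintype.card_Iic k).trans (Fin.card_Iic k)))
  have hsup := Submodule.finrank_sup_add_finrank_inf_eq U V
  have hle : Module.finrank ℝ ↥(U ⊔ V) ≤ n := by
    have := Submodule.finrank_le (U ⊔ V)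
    rwa [hfr] at this
  have hkn : (k : ℕ) < n := k.isLt
  have hpos : 0 < Module.finrank ℝ ↥(U ⊓ V) := by omega
  obtain ⟨⟨x, hxUV⟩, hx0⟩ := Module.finrank_pos_iff_exists_ne_zero.mp hpos
  have hx0' : x ≠ 0 := by
    intro h; exact hx0 (Subtype.ext h)
  obtain ⟨hxU, hxV⟩ := hxUV
  have hnorm : (0:ℝ) < ‖x‖ ^ 2 := pow_pos (norm_pos_iff.mpr hx0') 2
  have h1 : lam k * ‖x‖ ^ 2 ≤ ⟪x, Matrix.toEuclideanLin L x⟫ :=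
    stmt5_quad_ge bu (Matrix.toEuclideanLin L) lam (by simpa [hbu] using hLu) hlam k
      (by rwa [hbu])
  have h2 : c * ‖x‖ ^ 2 ≤ ⟪x, Matrix.toEuclideanLin Δ x⟫ := by
    refine hquad x (Submodule.span_mono (Set.image_mono (f := u) ?_) hxU)
    intro i hi
    exact hk.trans hi
  have h3 : ⟪x, Matrix.toEuclideanLin (L + Δ) x⟫ ≤ mu k * ‖x‖ ^ 2 :=
    stmt5_quad_le bv (Matrix.toEuclideanLin (L + Δ)) mu (by simpa [hbv] using hMv) hmu k
      (by rwa [hbv])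
  have hadd : ⟪x, Matrix.toEuclideanLin (L + Δ) x⟫
      = ⟪x, Matrix.toEuclideanLin L x⟫ + ⟪x, Matrix.toEuclideanLin Δ x⟫ := by
    rw [map_add, LinearMap.add_apply, inner_add_right]
  have : (lam k + c) * ‖x‖ ^ 2 ≤ mu k * ‖x‖ ^ 2 := by
    rw [add_mul]
    calc lam k * ‖x‖ ^ 2 + c * ‖x‖ ^ 2
        ≤ ⟪x, Matrix.toEuclideanLin L x⟫ + ⟪x, Matrix.toEuclideanLin Δ x⟫ := add_le_add h1 h2
      _ = ⟪x, Matrix.toEuclideanLin (L + Δ) x⟫ := hadd.symm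
      _ ≤ mu k * ‖x‖ ^ 2 := h3
  exact le_of_mul_le_mul_right this hnorm
end
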